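/- Let c ∈ ℝ. For x, y ∈ ℝ³ let K(x,y) = exp(i c ⟨x,y⟩). Then applying the Sturm–Liouville operator in the x-variable to the kernel yields (−Δ_x + (x·∇_x)² + 3 x·∇_x + c²|x|²) K(x,y) = ( c²|x|² + c²|y|² − c² ⟨x,y⟩² + 4 i c ⟨x,y⟩ ) K(x,y), an expression symmetric in x and y; consequently (D_c)_x e^{ic⟨x,y⟩} = (D_c)_y e^{ic⟨x,y⟩} for all x, y ∈ ℝ³. (This kernel symmetry underlies the paper's claim in Section 3.1 that the restricted Fourier integral operator F_c and the differential operator D_c commute.) -/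

import Mathlib

open MeasureTheory
open scoped RealInnerProductSpace

/-- The Euclidean Laplacian `Δu` of a complex-valued function on `ℝ³`. -/
noncomputable def lapC (u : EuclideanSpace ℝ (Fin 3) → ℂ) (x : EuclideanSpace ℝ (Fin 3)) : ℂ :=
  ∑ i : Fin 3, fderiv ℝ (fderiv ℝ u) x (EuclideanSpace.single i 1) (EuclideanSpace.single i 1)

/-- The radial derivative `(x·∇u)(x) = ⟨x, ∇u(x)⟩` (directional derivative in direction `x`). -/
noncomputable def xGradC (u : EuclideanSpace ℝ (Fin 3) → ℂ) (x : EuclideanSpace ℝ (Fin 3)) : ℂ :=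
  fderiv ℝ u x x

/-- The Sturm–Liouville operator `D_c u = −Δu + (x·∇)²u + 3(x·∇u) + c²|x|²u`
for complex-valued `u`. -/
noncomputable def DcC (c : ℝ) (u : EuclideanSpace ℝ (Fin 3) → ℂ)
    (x : EuclideanSpace ℝ (Fin 3)) : ℂ :=
  - lapC u x + xGradC (xGradC u) x + 3 * xGradC u x + (c ^ 2 * ‖x‖ ^ 2 : ℝ) * u x

noncomputable def Lmap (c : ℝ) (y : EuclideanSpace ℝ (Fin 3)) :
    EuclideanSpace ℝ (Fin 3) →L[ℝ] ℂ :=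
  (Complex.I * c) • (Complex.ofRealCLM.comp (innerSL ℝ y))

lemma Lmap_apply (c : ℝ) (y v : EuclideanSpace ℝ (Fin 3)) :
    Lmap c y v = Complex.I * c * (⟪v, y⟫ : ℝ) := by
  simp [Lmap, real_inner_comm y v, mul_assoc]

lemma ker_eq (c : ℝ) (y : EuclideanSpace ℝ (Fin 3)) :
    (fun x' : EuclideanSpace ℝ (Fin 3) => Complex.exp (Complex.I * c * ⟪x', y⟫))
      = fun x' => Complex.exp (Lmap c y x') := by
  funext v; rw [Lmap_apply]

lemma hderiv (c : ℝ) (y x : EuclideanSpace ℝ (Fin 3)) :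
    HasFDerivAt (fun x' => Complex.exp (Lmap c y x'))
      (Complex.exp (Lmap c y x) • Lmap c y) x :=
  (Complex.hasDerivAt_exp (Lmap c y x)).comp_hasFDerivAt x (Lmap c y).hasFDerivAt

lemma fderiv_ker (c : ℝ) (y : EuclideanSpace ℝ (Fin 3)) :
    fderiv ℝ (fun x' => Complex.exp (Lmap c y x'))
      = fun x => Complex.exp (Lmap c y x) • Lmap c y := by
  funext x; exact (hderiv c y x).fderiv

lemma hderiv2 (c : ℝ) (y x : EuclideanSpace ℝ (Fin 3)) :
    HasFDerivAt (fun x' => Complex.exp (Lmap c y x') • Lmap c y)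
      ((Complex.exp (Lmap c y x) • Lmap c y).smulRight (Lmap c y)) x := by
  have h := (hderiv c y x).smul (hasFDerivAt_const (Lmap c y) x)
  simp at h
  exact h

lemma Dc_kernel (c : ℝ) (x y : EuclideanSpace ℝ (Fin 3)) :
    DcC c (fun x' => Complex.exp (Complex.I * c * ⟪x', y⟫)) x
        = ((c ^ 2 * ‖x‖ ^ 2 + c ^ 2 * ‖y‖ ^ 2 - c ^ 2 * ⟪x, y⟫ ^ 2 : ℝ)
            + 4 * Complex.I * c * (⟪x, y⟫ : ℝ))
          * Complex.exp (Complex.I * c * ⟪x, y⟫) := by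
  rw [ker_eq]
  set A := Lmap c y with hA
  have hlap : lapC (fun x' => Complex.exp (A x')) x
      = - (c ^ 2 * ‖y‖ ^ 2 : ℝ) * Complex.exp (A x) := by
    unfold lapC
    rw [fderiv_ker]
    have h2 : fderiv ℝ (fun x => Complex.exp (A x) • A) x
        = (Complex.exp (A x) • A).smulRight A := (hderiv2 c y x).fderiv
    rw [h2]
    have hAe : ∀ i : Fin 3, A (EuclideanSpace.single i 1) = Complex.I * c * (y i : ℝ) := by
      intro i
      rw [hA, Lmap_apply]
      simp [EuclideanSpace.inner_single_left]
    have hy : (‖y‖ ^ 2 : ℝ) = ∑ i : Fin 3, (y i) ^ 2 := by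
      rw [EuclideanSpace.norm_eq, Real.sq_sqrt (by positivity)]
      simp [sq_abs]
    simp only [ContinuousLinearMap.smulRight_apply, ContinuousLinearMap.smul_apply, hAe,
      smul_eq_mul]
    rw [hy]
    push_cast
    rw [Finset.sum_congr rfl (fun i _ => by ring_nf; rw [Complex.I_sq]; ring :
      ∀ i ∈ Finset.univ,
      Complex.exp (A x) * (Complex.I * c * (y i : ℝ)) * (Complex.I * c * (y i : ℝ))
        = (-(c:ℂ)^2 * Complex.exp (A x)) * (y i : ℂ)^2), ← Finset.mul_sum]
    ring
  have hg : xGradC (fun x' => Complex.exp (A x')) x = Complex.exp (A x) * A x := by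
    unfold xGradC; rw [fderiv_ker]; simp [hA]
  have hgg : xGradC (xGradC (fun x' => Complex.exp (A x'))) x
      = Complex.exp (A x) * A x + Complex.exp (A x) * (A x) * (A x) := by
    have heq : xGradC (fun x' => Complex.exp (A x'))
        = fun x' => Complex.exp (A x') * A x' := by
      funext x'; unfold xGradC; rw [fderiv_ker]; simp [hA]
    rw [heq]
    unfold xGradC
    have h := (hderiv c y x).mul A.hasFDerivAt
    rw [← hA] at h
    rw [show fderiv ℝ (fun x' => Complex.exp (A x') * A x') x = _ from h.fderiv]
    simp [smul_eq_mul]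
    ring
  unfold DcC
  rw [hlap, hg, hgg]
  simp only [hA, Lmap_apply]
  have hI : Complex.I * Complex.I = -1 := Complex.I_mul_I
  push_cast
  ring_nf
  rw [Complex.I_sq]
  ring

/-- **Kernel symmetry (Section 3.1).** Applying `D_c` in the `x`-variable to the Fourier kernel
`K(x,y) = e^{ic⟨x,y⟩}` yields `(c²|x|² + c²|y|² − c²⟨x,y⟩² + 4ic⟨x,y⟩)K(x,y)`, an expression
symmetric in `x` and `y`; consequently `(D_c)_x K = (D_c)_y K`. -/
theorem kernel_symmetry_Dc (c : ℝ) (x y : EuclideanSpace ℝ (Fin 3)) :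
    DcC c (fun x' => Complex.exp (Complex.I * c * ⟪x', y⟫)) x
        = ((c ^ 2 * ‖x‖ ^ 2 + c ^ 2 * ‖y‖ ^ 2 - c ^ 2 * ⟪x, y⟫ ^ 2 : ℝ)
            + 4 * Complex.I * c * (⟪x, y⟫ : ℝ))
          * Complex.exp (Complex.I * c * ⟪x, y⟫)
      ∧ DcC c (fun x' => Complex.exp (Complex.I * c * ⟪x', y⟫)) x
        = DcC c (fun y' => Complex.exp (Complex.I * c * ⟪x, y'⟫)) y := by
  refine ⟨Dc_kernel c x y, ?_⟩
  have h2 : (fun y' : EuclideanSpace ℝ (Fin 3) => Complex.exp (Complex.I * c * ⟪x, y'⟫))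
      = fun y' => Complex.exp (Complex.I * c * ⟪y', x⟫) := by
    funext v; rw [real_inner_comm]
  rw [Dc_kernel c x y, h2, Dc_kernel c y x, real_inner_comm y x]
  push_cast
  ring
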